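/- Let R be a finite poset of size n, let x be a minimal element and y a maximal element of R with x ≤ y, and let σ be a linear extension of R with σ(x) = 1 and σ(y) = n. Then Ech_σ(x) = y. -/

import Mathlib

open scoped Classical
open Finset

noncomputable section

/-- A linear extension of a finite poset, viewed as an order-preserving
bijection onto `Fin n`. -/
def IsLinExt {α : Type*} [PartialOrder α] {n : ℕ} (σ : α ≃ Fin n) : Prop :=
  ∀ a b : α, a ≤ b → σ a ≤ σ b

/-- The Cartan matrix of a finite poset with respect to a linear extension. -/
def cartan {α : Type*} [PartialOrder α] {n : ℕ} (σ : α ≃ Fin n) :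
    Matrix (Fin n) (Fin n) ℂ :=
  fun i j => if σ.symm j ≤ σ.symm i then 1 else 0

/-- Upper-triangular matrices. -/
def IsUpperTri {n : ℕ} (U : Matrix (Fin n) (Fin n) ℂ) : Prop :=
  ∀ i j : Fin n, j < i → U i j = 0

/-- The permutation matrix of `π`, with a `1` in row `i` and column `π i`. -/
def permMat {n : ℕ} (π : Equiv.Perm (Fin n)) : Matrix (Fin n) (Fin n) ℂ :=
  fun i j => if π i = j then 1 else 0

/-- `π` is the (unique) permutation indexing the Bruhat cell of `W`,
i.e. `W ∈ B (permMat π) B` with `B` the invertible upper-triangular matrices. -/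
def IsBruhatPerm {n : ℕ} (W : Matrix (Fin n) (Fin n) ℂ) (π : Equiv.Perm (Fin n)) : Prop :=
  ∃ U₁ U₂ : Matrix (Fin n) (Fin n) ℂ,
    IsUpperTri U₁ ∧ IsUpperTri U₂ ∧ IsUnit U₁.det ∧ IsUnit U₂.det ∧
      W = U₁ * permMat π * U₂

/-- Echelonmotion with respect to `σ`, given the Bruhat permutation `π` of the
Cartan matrix: `ech σ π x = y` iff `permMat π` has a `1` in row `σ y`, column `σ x`. -/
def ech {α : Type*} [PartialOrder α] {n : ℕ} (σ : α ≃ Fin n) (π : Equiv.Perm (Fin n)) :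
    α → α := fun x => σ.symm (π⁻¹ (σ x))

end

/-- If `x` is minimal, `y` is maximal, `x ≤ y`, and `σ` is a linear extension
putting `x` first and `y` last, then `Ech_σ(x) = y`. -/
theorem stmt10 {α : Type*} [PartialOrder α] [Fintype α] {x y : α}
    (hx : IsMin x) (hy : IsMax y) (hxy : x ≤ y)
    (σ : α ≃ Fin (Fintype.card α)) (hσ : IsLinExt σ)
    (hσx : (σ x : ℕ) = 0) (hσy : (σ y : ℕ) = Fintype.card α - 1)
    (π : Equiv.Perm (Fin (Fintype.card α))) (hπ : IsBruhatPerm (cartan σ) π) :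
    ech σ π x = y := by

  obtain ⟨U₁, U₂, h1, h2, hd1, hd2, hW⟩ := hπ
  have hxle : ∀ k : Fin (Fintype.card α), σ x ≤ k := by
    intro k; rw [Fin.le_def, hσx]; omega
  have hyge : ∀ k : Fin (Fintype.card α), k ≤ σ y := by
    intro k; rw [Fin.le_def, hσy]; have := k.isLt; omega
  have hWv : cartan σ (σ y) (σ x) = 1 := by
    simp [cartan, hxy]
  have hexp : cartan σ (σ y) (σ x)
      = U₁ (σ y) (σ y) * (permMat π (σ y) (σ x) * U₂ (σ x) (σ x)) := by
    rw [hW, Matrix.mul_assoc, Matrix.mul_apply]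
    rw [Finset.sum_eq_single (σ y)]
    · congr 1
      rw [Matrix.mul_apply, Finset.sum_eq_single (σ x)]
      · intro k _ hk
        rw [h2 k (σ x) (lt_of_le_of_ne (hxle k) (Ne.symm hk)), mul_zero]
      · intro h; exact absurd (Finset.mem_univ _) h
    · intro j _ hj
      rw [h1 (σ y) j (lt_of_le_of_ne (hyge j) hj), zero_mul]
    · intro h; exact absurd (Finset.mem_univ _) h
  have hP : permMat π (σ y) (σ x) ≠ 0 := by
    intro h0
    rw [hexp, h0, zero_mul, mul_zero] at hWv
    exact zero_ne_one hWv
  have hπy : π (σ y) = σ x := by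
    by_contra hne
    exact hP (by simp [permMat, hne])
  have : π⁻¹ (σ x) = σ y := by
    rw [← hπy, Equiv.Perm.inv_def, Equiv.symm_apply_apply]
  rw [ech, this, Equiv.symm_apply_apply]
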